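/- Let p be an odd prime, g ≥ 1, m = (p−1)/2, and c_k as above (coefficient of x^k in (x(x−1)(x−z₁)⋯(x−z_{2g−1}))^m). Then for 1 ≤ i ≤ g and 1 ≤ j < g, one has ∑_{k=1}^{2g−1} (z_k − 1)∂_k c_{ip−(j+1)} = (m − j + 1)·c_{ip−j} + (m − g + j + 1)·c_{ip−(j+1)} in 𝔽_p[z₁,…,z_{2g−1}]. -/

import Mathlib

open MvPolynomial Finset Polynomial

set_option synthInstance.maxHeartbeats 1000000
set_option maxHeartbeats 1000000

noncomputable def auxD {R : Type*} [CommRing R] {σ : Type*} (k : σ) :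
    Derivation R (Polynomial (MvPolynomial σ R)) (Polynomial (MvPolynomial σ R)) :=
  PolynomialModule.equivPolynomialSelf.compDer ((pderiv k).mapCoeffs)

section
variable {R : Type*} [CommRing R] {σ : Type*}

lemma auxD_coeff (k : σ) (q : Polynomial (MvPolynomial σ R)) (n : ℕ) :
    (auxD k q).coeff n = pderiv k (q.coeff n) := rfl

lemma auxD_X (k : σ) : auxD k (Polynomial.X : Polynomial (MvPolynomial σ R)) = 0 := by
  apply Polynomial.ext
  intro n
  rw [auxD_coeff]
  rcases eq_or_ne n 1 with h | h
  · simp [Polynomial.coeff_X, h]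
  · simp [Polynomial.coeff_X, Ne.symm h]

lemma auxD_C (k : σ) (a : MvPolynomial σ R) :
    auxD k (Polynomial.C a) = Polynomial.C (pderiv k a) := by
  apply Polynomial.ext
  intro n
  rw [auxD_coeff]
  rcases eq_or_ne n 0 with h | h <;>
    simp [Polynomial.coeff_C, h]

lemma auxD_X_sub_C (k t : σ) :
    auxD k (Polynomial.X - Polynomial.C (MvPolynomial.X t) : Polynomial (MvPolynomial σ R))
      = - Polynomial.C (pderiv (R := R) k (MvPolynomial.X t)) := by
  rw [map_sub, auxD_X, auxD_C, zero_sub]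

variable [DecidableEq σ]

lemma auxD_prod_off (k : σ) (s : Finset σ) (hk : k ∉ s) :
    auxD k (∏ t ∈ s, (Polynomial.X - Polynomial.C (MvPolynomial.X t)) :
      Polynomial (MvPolynomial σ R)) = 0 := by
  induction s using Finset.induction with
  | empty => simp only [Finset.prod_empty]; exact (auxD (σ := σ) k).map_one_eq_zero (R := R)
  | @insert a s ha ih =>
    rw [Finset.prod_insert ha, Derivation.leibniz,
      ih (fun h => hk (Finset.mem_insert_of_mem h)), auxD_X_sub_C,
      pderiv_X_of_ne (R := R) (fun h : a = k => hk (h ▸ Finset.mem_insert_self a s))]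
    simp

lemma deriv_prod_linear (s : Finset σ) :
    derivative (∏ t ∈ s, (Polynomial.X - Polynomial.C (MvPolynomial.X t)) :
        Polynomial (MvPolynomial σ R))
      = ∑ k ∈ s, ∏ t ∈ s.erase k, (Polynomial.X - Polynomial.C (MvPolynomial.X t)) := by
  induction s using Finset.induction with
  | empty => simp
  | @insert a s ha ih =>
    rw [Finset.prod_insert ha, derivative_mul, ih, Finset.sum_insert ha,
      Finset.erase_insert ha]
    simp only [derivative_sub, derivative_X, derivative_C, sub_zero, one_mul]
    rw [Finset.mul_sum]
    congr 1
    refine Finset.sum_congr rfl fun k hk => ?_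
    rw [Finset.erase_insert_of_ne (fun h : a = k => ha (h ▸ hk)),
      Finset.prod_insert (fun h => ha (Finset.mem_of_mem_erase h))]
end

section
variable {R : Type*} [CommRing R] {σ : Type*} [DecidableEq σ] [Fintype σ]

lemma coeff_X_mul_derivative {R' : Type*} [CommRing R'] (q : Polynomial R') (n : ℕ) :
    (Polynomial.X * Polynomial.derivative q).coeff n = (n : R') * q.coeff n := by
  cases n with
  | zero => simp [Polynomial.mul_coeff_zero]
  | succ t => rw [Polynomial.coeff_X_mul, Polynomial.coeff_derivative]; push_cast; ring

lemma key_identity (m : ℕ) (hm1 : 1 ≤ m) (n : ℕ) :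
    (∑ k : σ, (MvPolynomial.X k - 1) *
        pderiv k (Polynomial.coeff
          ((Polynomial.X * (Polynomial.X - 1)
            * ∏ t : σ, (Polynomial.X - Polynomial.C (MvPolynomial.X t))) ^ m) n))
      = ((n : MvPolynomial σ R) + 1 - (m : MvPolynomial σ R)) *
          Polynomial.coeff
          ((Polynomial.X * (Polynomial.X - 1)
            * ∏ t : σ, (Polynomial.X - Polynomial.C (MvPolynomial.X t))) ^ m) (n + 1)
        + ((m : MvPolynomial σ R) * ((Fintype.card σ : MvPolynomial σ R) + 2)
            - (n : MvPolynomial σ R)) *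
          Polynomial.coeff
          ((Polynomial.X * (Polynomial.X - 1)
            * ∏ t : σ, (Polynomial.X - Polynomial.C (MvPolynomial.X t))) ^ m) n := by
  set P : Polynomial (MvPolynomial σ R) :=
    ∏ t : σ, (Polynomial.X - Polynomial.C (MvPolynomial.X t)) with hP
  set f : Polynomial (MvPolynomial σ R) := Polynomial.X * (Polynomial.X - 1) * P with hf
  set F : Polynomial (MvPolynomial σ R) := f ^ m with hF
  set e : σ → Polynomial (MvPolynomial σ R) := fun k =>
    Polynomial.X * (Polynomial.X - 1) *
      ∏ t ∈ Finset.univ.erase k, (Polynomial.X - Polynomial.C (MvPolynomial.X t)) with he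
  have h1 : ∀ k : σ, (Polynomial.X - Polynomial.C (MvPolynomial.X k)) * e k = f := by
    intro k
    rw [he, hf, hP, ← Finset.mul_prod_erase Finset.univ _ (Finset.mem_univ k)]
    ring
  have hX1 : ∀ k : σ, auxD k ((Polynomial.X : Polynomial (MvPolynomial σ R)) - 1) = 0 := by
    intro k
    rw [map_sub, auxD_X, (auxD (σ := σ) k).map_one_eq_zero (R := R), sub_zero]
  have hDe : ∀ k : σ, auxD k (e k) = 0 := by
    intro k
    rw [he]
    simp only [Derivation.leibniz, auxD_prod_off k _ (Finset.notMem_erase k _),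
      auxD_X, hX1, smul_zero, zero_add, smul_eq_mul, mul_zero, add_zero]
  have hDf : ∀ k : σ, auxD k f = - e k := by
    intro k
    rw [← h1 k, Derivation.leibniz, hDe, auxD_X_sub_C, pderiv_X_self (R := R)]
    simp
    ring
  have hdf : Polynomial.derivative f
      = (2 * Polynomial.X - 1) * P + ∑ k : σ, e k := by
    have hE : (∑ k : σ, e k) = Polynomial.X * (Polynomial.X - 1) * Polynomial.derivative P := by
      rw [hP, deriv_prod_linear, Finset.mul_sum]
    rw [hE, hf]
    simp only [Polynomial.derivative_mul, Polynomial.derivative_sub, Polynomial.derivative_X,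
      Polynomial.derivative_one]
    ring
  have h2 : (∑ k : σ, (Polynomial.C (MvPolynomial.X k) - 1) * e k)
      = (Polynomial.X - 1) * (∑ k : σ, e k)
        - (Fintype.card σ : Polynomial (MvPolynomial σ R)) * f := by
    rw [Finset.mul_sum]
    rw [show (Fintype.card σ : Polynomial (MvPolynomial σ R)) * f
        = ∑ _k : σ, f by rw [Finset.sum_const, Finset.card_univ, nsmul_eq_mul]]
    rw [← Finset.sum_sub_distrib]
    refine Finset.sum_congr rfl fun k _ => ?_
    linear_combination -h1 k
  have hL4 : Polynomial.X * ∑ k : σ, (Polynomial.C (MvPolynomial.X k) - 1) * e k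
      = Polynomial.X * (Polynomial.X - 1) * Polynomial.derivative f
        - (2 * Polynomial.X - 1) * f
        - (Fintype.card σ : Polynomial (MvPolynomial σ R)) * (Polynomial.X * f) := by
    rw [h2, hdf, hf]
    ring
  have hDF : ∀ k : σ, auxD k F
      = -((m : Polynomial (MvPolynomial σ R)) * f ^ (m - 1) * e k) := by
    intro k
    rw [hF, Derivation.leibniz_pow, hDf k]
    simp only [smul_eq_mul, nsmul_eq_mul]
    ring
  have hsum : (∑ k : σ, Polynomial.C (MvPolynomial.X k - 1) * auxD k F)
      = -((m : Polynomial (MvPolynomial σ R)) * f ^ (m - 1))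
        * ∑ k : σ, (Polynomial.C (MvPolynomial.X k) - 1) * e k := by
    rw [Finset.mul_sum]
    refine Finset.sum_congr rfl fun k _ => ?_
    rw [hDF k, map_sub, map_one]
    ring
  have hdF : Polynomial.derivative F
      = (m : Polynomial (MvPolynomial σ R)) * f ^ (m - 1) * Polynomial.derivative f := by
    rw [hF, Polynomial.derivative_pow, Polynomial.C_eq_natCast]
  have hfm : f ^ (m - 1) * f = F := by
    rw [hF, ← pow_succ, Nat.sub_add_cancel hm1]
  have hL5 : Polynomial.X * ∑ k : σ, Polynomial.C (MvPolynomial.X k - 1) * auxD k F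
      = Polynomial.X * (Polynomial.X * Polynomial.derivative (-F))
        + Polynomial.X * (Polynomial.derivative F
            + Polynomial.C ((m : MvPolynomial σ R)
                * ((Fintype.card σ : MvPolynomial σ R) + 2)) * F)
        + Polynomial.C (-(m : MvPolynomial σ R)) * F := by
    rw [hsum, Polynomial.derivative_neg, hdF, ← hfm]
    simp only [map_mul, map_add, map_neg, map_natCast, map_ofNat]
    linear_combination (-((m : Polynomial (MvPolynomial σ R)) * f ^ (m - 1))) * hL4
  have h6 := congrArg (fun q => Polynomial.coeff q (n + 1)) hL5
  simp only [Polynomial.coeff_add, Polynomial.coeff_X_mul, Polynomial.finset_sum_coeff,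
    Polynomial.coeff_C_mul, auxD_coeff, Polynomial.coeff_derivative, Polynomial.coeff_neg,
    coeff_X_mul_derivative] at h6
  linear_combination h6
end

set_option maxHeartbeats 2000000 in
/-- Second contiguity relation for the entries of the Cartier–Manin matrix:
`∑_k (z_k − 1)∂_k c_{ip−(j+1)} = (m − j + 1)·c_{ip−j} + (m − g + j + 1)·c_{ip−(j+1)}`
with `m = (p−1)/2`, the coefficients being taken in `𝔽_p`. -/
theorem contiguity_relation_two (p : ℕ) (hp : p.Prime) (hodd : Odd p)
    (g : ℕ) (hg : 1 ≤ g) (m : ℕ) (hm : m = (p - 1) / 2)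
    (c : ℕ → MvPolynomial (Fin (2 * g - 1)) (ZMod p))
    (hc : ∀ k : ℕ, c k = Polynomial.coeff
      ((Polynomial.X * (Polynomial.X - 1)
          * ∏ t : Fin (2 * g - 1), (Polynomial.X - Polynomial.C (MvPolynomial.X t))
        : Polynomial (MvPolynomial (Fin (2 * g - 1)) (ZMod p))) ^ m) k)
    (i j : ℕ) (hi1 : 1 ≤ i) (hig : i ≤ g) (hj1 : 1 ≤ j) (hjg : j < g) :
    ∑ k : Fin (2 * g - 1),
        (MvPolynomial.X k - 1) * pderiv k (c (i * p - (j + 1)))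
      = MvPolynomial.C ((m : ZMod p) - (j : ZMod p) + 1) * c (i * p - j)
        + MvPolynomial.C ((m : ZMod p) - (g : ZMod p) + (j : ZMod p) + 1)
          * c (i * p - (j + 1)) := by
  have hpm : p % 2 = 1 := Nat.odd_iff.mp hodd
  have hp2 := hp.two_le
  have hp3 : 3 ≤ p := by omega
  have hm1 : 1 ≤ m := by omega
  have hm2 : (m : ZMod p) * 2 = -1 := by
    have h2m : ((2 * m : ℕ) : ZMod p) = ((p - 1 : ℕ) : ZMod p) := by
      congr 1
      omega
    rw [Nat.cast_mul, Nat.cast_sub hp.one_le, ZMod.natCast_self] at h2m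
    push_cast at h2m
    linear_combination h2m
  by_cases hle : j + 1 ≤ i * p
  · have hkey := key_identity (R := ZMod p) (σ := Fin (2 * g - 1)) m hm1 (i * p - (j + 1))
    rw [show i * p - (j + 1) + 1 = i * p - j from by omega] at hkey
    simp only [Fintype.card_fin] at hkey
    simp only [hc]
    rw [hkey]
    have hcast : ((i * p - (j + 1) : ℕ) : ZMod p) = -((j : ZMod p) + 1) := by
      rw [Nat.cast_sub hle]
      push_cast [ZMod.natCast_self]
      ring
    have hA : ((i * p - (j + 1) : ℕ) : MvPolynomial (Fin (2 * g - 1)) (ZMod p)) + 1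
          - (m : MvPolynomial (Fin (2 * g - 1)) (ZMod p))
        = MvPolynomial.C ((m : ZMod p) - (j : ZMod p) + 1) := by
      have hz : (m : ZMod p) - (j : ZMod p) + 1
          = ((i * p - (j + 1) : ℕ) : ZMod p) + 1 - (m : ZMod p) := by
        rw [hcast]
        linear_combination hm2
      rw [hz]
      simp [map_add, map_sub, map_one, map_natCast]
    have hB : (m : MvPolynomial (Fin (2 * g - 1)) (ZMod p))
          * (((2 * g - 1 : ℕ) : MvPolynomial (Fin (2 * g - 1)) (ZMod p)) + 2)
          - ((i * p - (j + 1) : ℕ) : MvPolynomial (Fin (2 * g - 1)) (ZMod p))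
        = MvPolynomial.C ((m : ZMod p) - (g : ZMod p) + (j : ZMod p) + 1) := by
      have hz : (m : ZMod p) - (g : ZMod p) + (j : ZMod p) + 1
          = (m : ZMod p) * (((2 * g - 1 : ℕ) : ZMod p) + 2)
            - ((i * p - (j + 1) : ℕ) : ZMod p) := by
        rw [hcast, Nat.cast_sub (by omega : 1 ≤ 2 * g)]
        push_cast
        linear_combination (-(g : ZMod p)) * hm2
      rw [hz]
      simp [map_add, map_sub, map_one, map_mul, map_natCast, map_ofNat]
    rw [hA, hB]
  · have h1 : i * p - (j + 1) = 0 := by omega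
    have h2 : i * p - j = 0 := by omega
    have hc0 : c 0 = 0 := by
      rw [hc, Polynomial.coeff_zero_eq_eval_zero]
      simp [Polynomial.eval_pow, Polynomial.eval_mul, zero_pow (show m ≠ 0 by omega)]
    rw [h1, h2, hc0]
    simp
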